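/- If x ↦ f(x) = sinh(x)·arcsinh(1/(2 sinh x)) on (0,∞), then f is bounded above by 1/2. -/

import Mathlib

theorem sinh_arsinh_bounded (x : ℝ) (hx : 0 < x) :
    Real.sinh x * Real.arsinh (1 / (2 * Real.sinh x)) ≤ 1 / 2 := by
  have hs : 0 < Real.sinh x := Real.sinh_pos_iff.mpr hx
  set t := 1 / (2 * Real.sinh x) with ht
  have htpos : 0 < t := by positivity
  have harsinh : Real.arsinh t ≤ t := by
    calc Real.arsinh t ≤ Real.arsinh (Real.sinh t) :=
          Real.arsinh_le_arsinh.mpr (le_of_lt (Real.self_lt_sinh_iff.mpr htpos))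
      _ = t := Real.arsinh_sinh t
  calc Real.sinh x * Real.arsinh t ≤ Real.sinh x * t :=
        mul_le_mul_of_nonneg_left harsinh hs.le
    _ = 1 / 2 := by rw [ht, mul_one_div, div_eq_iff (by positivity)]; ring
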